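/- Let 𝒳 and 𝒴 be finite nonempty types, r : 𝒳 × 𝒴 → ℝ a probability mass function with marginals p(x) = Σ_y r (x, y) and q(y) = Σ_x r (x, y), n a positive natural number and ε > 0. Define the jointly typical set T_ε^{(n)} ⊆ (Fin n → 𝒳) × (Fin n → 𝒴) as the set of pairs (x, y) such that x ∈ A_ε^{(n)}(p), y ∈ A_ε^{(n)}(q), and the paired sequence i ↦ (x i, y i) lies in A_ε^{(n)}(r). Then Σ_{(x, y) ∈ T_ε^{(n)}} (∏ i, p (x i)) * (∏ i, q (y i)) ≤ 2^{−n(H(p) + H(q) − H(r) − 3ε)}. -/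

import Mathlib

open Finset

/-- Shannon entropy of a pmf `p` on a finite type, `H(p) = -∑ x, p x * log₂ (p x)`
(with the convention `0 * log₂ 0 = 0`). -/
noncomputable def shannonEntropy {𝒳 : Type*} [Fintype 𝒳] (p : 𝒳 → ℝ) : ℝ :=
  -∑ x, p x * Real.logb 2 (p x)

open Classical in
/-- The entropy-typical set `A_ε^{(n)}(p)`: sequences `x ∈ 𝒳^n` with
`2^{-n(H(p)+ε)} ≤ ∏ i, p (x i) ≤ 2^{-n(H(p)-ε)}`. -/
noncomputable def typicalSet {𝒳 : Type*} [Fintype 𝒳] (p : 𝒳 → ℝ) (n : ℕ) (ε : ℝ) :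
    Finset (Fin n → 𝒳) :=
  Finset.univ.filter (fun x =>
    (2 : ℝ) ^ (-(n : ℝ) * (shannonEntropy p + ε)) ≤ ∏ i, p (x i) ∧
    ∏ i, p (x i) ≤ (2 : ℝ) ^ (-(n : ℝ) * (shannonEntropy p - ε)))

open Classical in
/-- The jointly typical set `T_ε^{(n)}` for a joint pmf `r` on `𝒳 × 𝒴` with marginals
`p` and `q`: pairs of sequences each marginally typical and jointly typical, as pairs. -/
noncomputable def jointlyTypicalSet {𝒳 𝒴 : Type*} [Fintype 𝒳] [Fintype 𝒴]
    (r : 𝒳 × 𝒴 → ℝ) (p : 𝒳 → ℝ) (q : 𝒴 → ℝ) (n : ℕ) (ε : ℝ) :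
    Finset ((Fin n → 𝒳) × (Fin n → 𝒴)) :=
  Finset.univ.filter (fun xy =>
    xy.1 ∈ typicalSet p n ε ∧ xy.2 ∈ typicalSet q n ε ∧
    (fun i => (xy.1 i, xy.2 i)) ∈ typicalSet r n ε)

/-- If `x` and `y` are drawn independently from the product marginals `p^n` and `q^n`,
the probability they land in the jointly typical set is at most
`2^{-n(H(p)+H(q)-H(r)-3ε)}`. -/
theorem prob_jointlyTypical_of_indep_le {𝒳 𝒴 : Type*} [Fintype 𝒳] [Fintype 𝒴]
    [Nonempty 𝒳] [Nonempty 𝒴]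
    (r : 𝒳 × 𝒴 → ℝ) (hr : ∀ xy, 0 ≤ r xy) (hsum : ∑ xy, r xy = 1)
    (p : 𝒳 → ℝ) (hp : ∀ x, p x = ∑ y, r (x, y))
    (q : 𝒴 → ℝ) (hq : ∀ y, q y = ∑ x, r (x, y))
    (n : ℕ) (hn : 0 < n) (ε : ℝ) (hε : 0 < ε) :
    ∑ xy ∈ jointlyTypicalSet r p q n ε, (∏ i, p (xy.1 i)) * (∏ i, q (xy.2 i)) ≤
      (2 : ℝ) ^ (-(n : ℝ) *
        (shannonEntropy p + shannonEntropy q - shannonEntropy r - 3 * ε)) := by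
  classical
  set Hp := shannonEntropy p
  set Hq := shannonEntropy q
  set Hr := shannonEntropy r
  set a : ℝ := (2:ℝ) ^ (-(n : ℝ) * (Hp - ε)) with ha
  set b : ℝ := (2:ℝ) ^ (-(n : ℝ) * (Hq - ε)) with hb
  set c : ℝ := (2:ℝ) ^ (-(n : ℝ) * (Hr + ε)) with hc
  have hc0 : 0 < c := Real.rpow_pos_of_pos (by norm_num) _
  have ha0 : 0 < a := Real.rpow_pos_of_pos (by norm_num) _
  have hb0 : 0 < b := Real.rpow_pos_of_pos (by norm_num) _
  -- total sum of products of r over all pairs is 1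
  have htot : ∑ xy : (Fin n → 𝒳) × (Fin n → 𝒴), ∏ i, r (xy.1 i, xy.2 i) = 1 := by
    have := Fintype.sum_equiv (Equiv.arrowProdEquivProdArrow (Fin n) (fun _ => 𝒳) (fun _ => 𝒴))
      (fun g : Fin n → 𝒳 × 𝒴 => ∏ i, r (g i))
      (fun xy : (Fin n → 𝒳) × (Fin n → 𝒴) => ∏ i, r (xy.1 i, xy.2 i))
      (fun g => by simp [Equiv.arrowProdEquivProdArrow])
    rw [← this, ← Fintype.piFinset_univ,
      ← Finset.prod_univ_sum (fun i : Fin n => Finset.univ) (fun _ z => r z)]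
    simp [hsum]
  -- sum of ∏ r over the jointly typical set is ≤ 1
  have hsumT : ∑ xy ∈ jointlyTypicalSet r p q n ε, ∏ i, r (xy.1 i, xy.2 i) ≤ 1 := by
    rw [← htot]
    exact Finset.sum_le_sum_of_subset_of_nonneg (Finset.subset_univ _)
      (fun xy _ _ => Finset.prod_nonneg fun i _ => hr _)
  -- pointwise bound
  have hpt : ∀ xy ∈ jointlyTypicalSet r p q n ε,
      (∏ i, p (xy.1 i)) * (∏ i, q (xy.2 i)) ≤ (a * b / c) * ∏ i, r (xy.1 i, xy.2 i) := by
    intro xy hxy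
    simp only [jointlyTypicalSet, typicalSet, Finset.mem_filter, Finset.mem_univ,
      true_and] at hxy
    obtain ⟨⟨_, hx2⟩, ⟨_, hy2⟩, ⟨hr1, _⟩⟩ := hxy
    have hp0 : 0 ≤ ∏ i, p (xy.1 i) :=
      Finset.prod_nonneg fun i _ => by rw [hp]; exact Finset.sum_nonneg fun y _ => hr _
    have hq0 : 0 ≤ ∏ i, q (xy.2 i) :=
      Finset.prod_nonneg fun i _ => by rw [hq]; exact Finset.sum_nonneg fun x _ => hr _
    calc (∏ i, p (xy.1 i)) * (∏ i, q (xy.2 i)) ≤ a * b :=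
          mul_le_mul hx2 hy2 hq0 ha0.le
      _ = (a * b / c) * c := by field_simp
      _ ≤ (a * b / c) * ∏ i, r (xy.1 i, xy.2 i) := by
          apply mul_le_mul_of_nonneg_left hr1 (by positivity)
  calc ∑ xy ∈ jointlyTypicalSet r p q n ε, (∏ i, p (xy.1 i)) * (∏ i, q (xy.2 i))
      ≤ ∑ xy ∈ jointlyTypicalSet r p q n ε, (a * b / c) * ∏ i, r (xy.1 i, xy.2 i) :=
        Finset.sum_le_sum hpt
    _ = (a * b / c) * ∑ xy ∈ jointlyTypicalSet r p q n ε, ∏ i, r (xy.1 i, xy.2 i) := by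
        rw [Finset.mul_sum]
    _ ≤ (a * b / c) * 1 := mul_le_mul_of_nonneg_left hsumT (by positivity)
    _ = (2:ℝ) ^ (-(n : ℝ) * (Hp + Hq - Hr - 3 * ε)) := by
        rw [mul_one, ha, hb, hc, div_eq_mul_inv, ← Real.rpow_neg (by norm_num),
          ← Real.rpow_add (by norm_num), ← Real.rpow_add (by norm_num)]
        ring_nf
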